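/- Every nonempty convex subset of a locally convex topological vector space is admissible in the sense of Klee: for every compact subset K and every open neighborhood V of 0 there exists a continuous map h : K → X with x − h(x) ∈ V for all x ∈ K and h(K) contained in a finite-dimensional subspace. -/

import Mathlib

/-- Every nonempty convex subset `X` of a (real, Hausdorff) locally
convex topological vector space `E` is admissible in the sense of Klee: for every
compact `K ⊆ X` and every open neighborhood `V` of `0` in `E` there is a continuous
map `h` on `K` with values in `X`, with `x - h x ∈ V` for all `x ∈ K`, and with
`h (K)` contained in a finite-dimensional linear subspace of `E`. -/
theorem convex_admissible_of_locallyConvex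
    {E : Type*} [AddCommGroup E] [Module ℝ E] [TopologicalSpace E]
    [IsTopologicalAddGroup E] [ContinuousSMul ℝ E] [LocallyConvexSpace ℝ E]
    (X : Set E) (hXne : X.Nonempty) (hXconv : Convex ℝ X) :
    ∀ K : Set E, K ⊆ X → IsCompact K →
      ∀ V : Set E, IsOpen V → (0 : E) ∈ V →
        ∃ h : E → E, ContinuousOn h K ∧ (∀ x ∈ K, h x ∈ X) ∧
          (∀ x ∈ K, x - h x ∈ V) ∧
          ∃ L : Submodule ℝ E, FiniteDimensional ℝ L ∧ ∀ x ∈ K, h x ∈ L := by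
  intro K hKX hK V hV hV0
  classical
  rcases K.eq_empty_or_nonempty with rfl | hKne
  · exact ⟨fun _ => 0, continuousOn_empty _, by simp, by simp,
      ⊥, inferInstance, by simp⟩
  -- choose a convex open neighborhood `W ⊆ V` of `0`
  obtain ⟨s, ⟨hs_nhds, hs_conv⟩, hsV⟩ :=
    (LocallyConvexSpace.convex_basis_zero ℝ E).mem_iff.mp (hV.mem_nhds hV0)
  set W : Set E := interior s with hWdef
  have hWo : IsOpen W := isOpen_interior
  have hWc : Convex ℝ W := hs_conv.interior
  have hW0 : (0 : E) ∈ W := mem_interior_iff_mem_nhds.2 hs_nhds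
  have hWV : W ⊆ V := interior_subset.trans hsV
  -- membership in `W` is gauge < 1
  have hWgauge : ∀ y : E, y ∈ W ↔ gauge W y < 1 := by
    intro y
    exact (Set.ext_iff.1 (gauge_lt_one_eq_self_of_isOpen hWc hW0 hWo) y).symm
  have hgauge_cont : Continuous (gauge W) :=
    continuous_gauge hWc (hWo.mem_nhds hW0)
  -- cover `K` by finitely many translates `xᵢ + W`
  have hcover : K ⊆ ⋃ x : K, {y : E | y - (x : E) ∈ W} := by
    intro y hy
    exact Set.mem_iUnion.2 ⟨⟨y, hy⟩, by simpa using hW0⟩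
  obtain ⟨t, ht⟩ := hK.elim_finite_subcover (fun x : K => {y : E | y - (x : E) ∈ W})
    (fun x => (hWo.preimage (continuous_id.sub continuous_const) : _)) hcover
  -- partition-of-unity-like weights
  set w : E → K → ℝ := fun y i => max (1 - gauge W (y - (i : E))) 0 with hw
  have hw_nonneg : ∀ y i, 0 ≤ w y i := fun y i => le_max_right _ _
  have hw_cont : ∀ i : K, Continuous fun y => w y i := fun i =>
    ((continuous_const.sub (hgauge_cont.comp (continuous_id.sub continuous_const))).max
      continuous_const)
  have hw_pos : ∀ y : E, ∀ i : K, y - (i : E) ∈ W → 0 < w y i := by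
    intro y i hyi
    have := (hWgauge _).1 hyi
    simp only [hw, lt_max_iff]
    left; linarith
  have hw_mem : ∀ y : E, ∀ i : K, w y i ≠ 0 → y - (i : E) ∈ W := by
    intro y i hyi
    have h0 : 0 ≤ gauge W (y - (i : E)) := gauge_nonneg _
    rcases lt_or_ge (gauge W (y - (i : E))) 1 with h | h
    · exact (hWgauge _).2 h
    · exfalso; apply hyi
      simp only [hw, max_eq_right_iff]
      linarith
  set den : E → ℝ := fun y => ∑ i ∈ t, w y i with hden
  have hden_cont : Continuous den := continuous_finset_sum _ fun i _ => hw_cont i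
  have hden_pos : ∀ y ∈ K, 0 < den y := by
    intro y hy
    obtain ⟨i, hit, hiy⟩ := Set.mem_iUnion₂.1 (ht hy)
    exact Finset.sum_pos' (fun j _ => hw_nonneg y j) ⟨i, hit, hw_pos y i hiy⟩
  set h : E → E := fun y => (den y)⁻¹ • ∑ i ∈ t, w y i • (i : E) with hh
  have hcm : ∀ y, h y = t.centerMass (w y) (fun i : K => (i : E)) := fun y => rfl
  refine ⟨h, ?_, ?_, ?_, ?_⟩
  · -- continuity
    exact ContinuousOn.smul
      ((hden_cont.continuousOn).inv₀ fun y hy => (hden_pos y hy).ne')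
      (continuous_finset_sum _ fun i _ =>
        (hw_cont i).smul continuous_const).continuousOn
  · -- values in X
    intro y hy
    rw [hcm, ← hXconv.convexHull_eq]
    exact Finset.centerMass_mem_convexHull t (fun i _ => hw_nonneg y i)
      (hden_pos y hy) (fun i _ => hKX i.2)
  · -- approximation
    intro y hy
    have hdy := hden_pos y hy
    have key : y - h y = t.centerMass (w y) (fun i : K => y - (i : E)) := by
      rw [hcm, Finset.centerMass, Finset.centerMass]
      have : ∑ i ∈ t, w y i • (y - (i : E))
          = (∑ i ∈ t, w y i) • y - ∑ i ∈ t, w y i • (i : E) := by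
        rw [Finset.sum_smul, ← Finset.sum_sub_distrib]
        simp [smul_sub]
      rw [this, smul_sub, inv_smul_smul₀ hdy.ne']
    rw [key, ← Finset.centerMass_filter_ne_zero]
    apply hWV
    rw [← hWc.convexHull_eq]
    refine Finset.centerMass_mem_convexHull _ (fun i _ => hw_nonneg y i) ?_ ?_
    · rwa [Finset.sum_filter_ne_zero]
    · intro i hi
      exact hw_mem y i (Finset.mem_filter.1 hi).2
  · -- finite-dimensional range
    refine ⟨Submodule.span ℝ (t.image (fun i : K => (i : E)) : Set E),
      FiniteDimensional.span_of_finite ℝ (Finset.finite_toSet _), ?_⟩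
    intro y _
    refine Submodule.smul_mem _ _ (Submodule.sum_mem _ fun i hi => ?_)
    exact Submodule.smul_mem _ _ (Submodule.subset_span
      (Finset.mem_coe.2 (Finset.mem_image_of_mem _ hi)))
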